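/- In the abelianization of the presented group Ĝ_α, the classes of c, d, e, f, g, h, i, j, k, and t are all equal; the classes of a, l, o, p, q, r, u, v, and w are all equal; the class of s is trivial; and the classes of x, y, and n are each equal to six times the class of v (written additively). -/

import Mathlib

/-- Generators of the presentation `Ĝ_α` of the fundamental group of the exterior
of the 2-component graph link `L_α` (with both splicing relations). -/
inductive GenA
  | c | d | e | f | g | h | i | j | k | l | o | p | q | r | u | v | w | a | x | y | n | s | t

open FreeGroup in
/-- The relators of the presentation `Ĝ_α` (including the two splicing relations) of the fundamental group of the
exterior of the 2-component graph link `L_α`. -/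
def relsAhat : Set (FreeGroup GenA) :=
  { of GenA.x * of GenA.y * of GenA.x * (of GenA.y * of GenA.x * of GenA.y)⁻¹,
    of GenA.n * of GenA.s * (of GenA.s * of GenA.n)⁻¹,
    of GenA.n * of GenA.t * (of GenA.t * of GenA.n)⁻¹,
    of GenA.s * ((of GenA.x)⁻¹ * of GenA.y * (of GenA.x) ^ 2 * of GenA.y * ((of GenA.x) ^ 3)⁻¹)⁻¹,
    of GenA.e * (of GenA.s * of GenA.t)⁻¹,
    of GenA.g * of GenA.d * (of GenA.c * of GenA.g)⁻¹,
    of GenA.v * of GenA.e * (of GenA.d * of GenA.v)⁻¹,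
    of GenA.c * of GenA.f * (of GenA.e * of GenA.c)⁻¹,
    of GenA.p * of GenA.g * (of GenA.f * of GenA.p)⁻¹,
    of GenA.v * of GenA.h * (of GenA.g * of GenA.v)⁻¹,
    of GenA.w * of GenA.i * (of GenA.h * of GenA.w)⁻¹,
    of GenA.a * of GenA.j * (of GenA.i * of GenA.a)⁻¹,
    of GenA.e * of GenA.k * (of GenA.j * of GenA.e)⁻¹,
    of GenA.r * of GenA.c * (of GenA.k * of GenA.r)⁻¹,
    of GenA.e * of GenA.o * (of GenA.l * of GenA.e)⁻¹,
    of GenA.r * of GenA.p * (of GenA.o * of GenA.r)⁻¹,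
    of GenA.g * of GenA.q * (of GenA.p * of GenA.g)⁻¹,
    of GenA.v * of GenA.r * (of GenA.q * of GenA.v)⁻¹,
    of GenA.c * of GenA.u * (of GenA.r * of GenA.c)⁻¹,
    of GenA.p * of GenA.v * (of GenA.u * of GenA.p)⁻¹,
    of GenA.h * of GenA.w * (of GenA.v * of GenA.h)⁻¹,
    of GenA.i * of GenA.a * (of GenA.w * of GenA.i)⁻¹,
    of GenA.j * of GenA.l * (of GenA.a * of GenA.j)⁻¹,
    of GenA.x * (of GenA.n)⁻¹,
    of GenA.n * (of GenA.c * of GenA.p * of GenA.v * of GenA.w * of GenA.a * of GenA.e *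
      of GenA.r * of GenA.g * of GenA.v * ((of GenA.e) ^ 3)⁻¹)⁻¹ }

section Aux

private def phiA : FreeGroup GenA →* Abelianization (PresentedGroup relsAhat) :=
  Abelianization.of.comp (QuotientGroup.mk' _)

private lemma phiA_rel {r : FreeGroup GenA} (h : r ∈ relsAhat) : phiA r = 1 := by
  have : (QuotientGroup.mk' (Subgroup.normalClosure relsAhat)) r = 1 :=
    (QuotientGroup.eq_one_iff r).mpr (Subgroup.subset_normalClosure h)
  show Abelianization.of ((QuotientGroup.mk' (Subgroup.normalClosure relsAhat)) r) = 1
  rw [this, map_one]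

private lemma braid_eq {G : Type*} [CommGroup G] {a b : G} (h : a * b * a = b * a * b) :
    a = b :=
  mul_left_cancel (((congrArg (· * a) (mul_comm a b)).symm.trans h :))

private lemma s_triv {G : Type*} [CommGroup G] {s x y : G}
    (h : s = x⁻¹ * y * x ^ 2 * y * (x ^ 3)⁻¹) (hxy : x = y) : s = 1 := by
  subst hxy; rw [h]; group

private lemma e_eq_t {G : Type*} [CommGroup G] {e s t : G} (h : e = s * t) (hs : s = 1) :
    e = t := by rw [h, hs, one_mul]

private lemma n_eq {G : Type*} [CommGroup G] {n c p v w a e r g : G}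
    (h : n = c * p * v * w * a * e * r * g * v * ((e ^ 3)⁻¹))
    (hc : c = e) (hp : p = v) (hw : w = v) (ha : a = v) (hr : r = v) (hg : g = e) :
    n = v ^ 6 := by
  rw [h, hc, hp, hw, ha, hr, hg]
  have key : e * v * v * v * v * e * v * e * v = v ^ 6 * e ^ 3 := by
    simp [pow_succ, mul_comm, mul_left_comm, mul_assoc]
  rw [key]; group

private lemma cancel_comm {G : Type*} [CommGroup G] {a b c : G} (h : a * b = c * a) :
    b = c := mul_left_cancel (h.trans (mul_comm c a))


private lemma six_pow {G : Type*} [CommGroup G] (t v : G) :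
    t * v * v * v * v * t * v * t * v * ((t ^ 3)⁻¹) = v ^ 6 := by
  have key : t * v * v * v * v * t * v * t * v = v ^ 6 * t ^ 3 := by
    simp [pow_succ, mul_comm, mul_left_comm, mul_assoc]
  rw [key]
  group

/-- The class of a generator in the abelianization of `Ĝ_α`. -/
def ab (gen : GenA) : Abelianization (PresentedGroup relsAhat) :=
  Abelianization.of (PresentedGroup.of gen)

private lemma phiA_of (g : GenA) : phiA (FreeGroup.of g) = ab g := rfl

/-- In the abelianization of `Ĝ_α`: the classes of `c,d,e,f,g,h,i,j,k,t` are all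
equal; the classes of `a,l,o,p,q,r,u,v,w` are all equal; the class of `s` is
trivial; and the classes of `x`, `y`, `n` each equal six times the class of `v`
(written here multiplicatively as a sixth power). -/
theorem abelianization_Galpha_classes :
    (ab .c = ab .t ∧ ab .d = ab .t ∧ ab .e = ab .t ∧ ab .f = ab .t ∧ ab .g = ab .t ∧
      ab .h = ab .t ∧ ab .i = ab .t ∧ ab .j = ab .t ∧ ab .k = ab .t) ∧
    (ab .a = ab .v ∧ ab .l = ab .v ∧ ab .o = ab .v ∧ ab .p = ab .v ∧ ab .q = ab .v ∧
      ab .r = ab .v ∧ ab .u = ab .v ∧ ab .w = ab .v) ∧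
    ab .s = 1 ∧
    (ab .x = (ab .v) ^ 6 ∧ ab .y = (ab .v) ^ 6 ∧ ab .n = (ab .v) ^ 6) := by
  obtain ⟨S, hS⟩ : ∃ S, S = relsAhat := ⟨_, rfl⟩
  have key : ∀ r ∈ S, phiA r = 1 := fun r h => phiA_rel (hS ▸ h)
  simp only [relsAhat] at hS
  simp only [hS, Set.forall_mem_insert, Set.mem_singleton_iff, forall_eq, map_mul, map_inv,
    map_pow, mul_inv_eq_one] at key
  obtain ⟨h1, h2, h3, h4, h5, h6, h7, h8, h9, h10, h11, h12, h13, h14, h15, h16, h17, h18,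
    h19, h20, h21, h22, h23, h24, h25⟩ := key
  have hxy : phiA (FreeGroup.of GenA.x) = phiA (FreeGroup.of GenA.y) := braid_eq h1
  have hd_c : phiA (FreeGroup.of GenA.d) = phiA (FreeGroup.of GenA.c) := cancel_comm h6
  have he_d : phiA (FreeGroup.of GenA.e) = phiA (FreeGroup.of GenA.d) := cancel_comm h7
  have hf_e : phiA (FreeGroup.of GenA.f) = phiA (FreeGroup.of GenA.e) := cancel_comm h8
  have hg_f : phiA (FreeGroup.of GenA.g) = phiA (FreeGroup.of GenA.f) := cancel_comm h9
  have hh_g : phiA (FreeGroup.of GenA.h) = phiA (FreeGroup.of GenA.g) := cancel_comm h10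
  have hi_h : phiA (FreeGroup.of GenA.i) = phiA (FreeGroup.of GenA.h) := cancel_comm h11
  have hj_i : phiA (FreeGroup.of GenA.j) = phiA (FreeGroup.of GenA.i) := cancel_comm h12
  have hk_j : phiA (FreeGroup.of GenA.k) = phiA (FreeGroup.of GenA.j) := cancel_comm h13
  have ho_l : phiA (FreeGroup.of GenA.o) = phiA (FreeGroup.of GenA.l) := cancel_comm h15
  have hp_o : phiA (FreeGroup.of GenA.p) = phiA (FreeGroup.of GenA.o) := cancel_comm h16
  have hq_p : phiA (FreeGroup.of GenA.q) = phiA (FreeGroup.of GenA.p) := cancel_comm h17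
  have hr_q : phiA (FreeGroup.of GenA.r) = phiA (FreeGroup.of GenA.q) := cancel_comm h18
  have hu_r : phiA (FreeGroup.of GenA.u) = phiA (FreeGroup.of GenA.r) := cancel_comm h19
  have hw_v : phiA (FreeGroup.of GenA.w) = phiA (FreeGroup.of GenA.v) := cancel_comm h21
  have ha_w : phiA (FreeGroup.of GenA.a) = phiA (FreeGroup.of GenA.w) := cancel_comm h22
  have hl_a : phiA (FreeGroup.of GenA.l) = phiA (FreeGroup.of GenA.a) := cancel_comm h23
  have hs : phiA (FreeGroup.of GenA.s) = 1 := s_triv h4 hxy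
  have he : phiA (FreeGroup.of GenA.e) = phiA (FreeGroup.of GenA.t) := e_eq_t h5 hs
  have hd : phiA (FreeGroup.of GenA.d) = phiA (FreeGroup.of GenA.t) := he_d ▸ he
  have hc : phiA (FreeGroup.of GenA.c) = phiA (FreeGroup.of GenA.t) := hd_c ▸ hd
  have hf : phiA (FreeGroup.of GenA.f) = phiA (FreeGroup.of GenA.t) := hf_e.trans he
  have hg : phiA (FreeGroup.of GenA.g) = phiA (FreeGroup.of GenA.t) := hg_f.trans hf
  have hh : phiA (FreeGroup.of GenA.h) = phiA (FreeGroup.of GenA.t) := hh_g.trans hg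
  have hi : phiA (FreeGroup.of GenA.i) = phiA (FreeGroup.of GenA.t) := hi_h.trans hh
  have hj : phiA (FreeGroup.of GenA.j) = phiA (FreeGroup.of GenA.t) := hj_i.trans hi
  have hk : phiA (FreeGroup.of GenA.k) = phiA (FreeGroup.of GenA.t) := hk_j.trans hj
  have ha : phiA (FreeGroup.of GenA.a) = phiA (FreeGroup.of GenA.v) := ha_w.trans hw_v
  have hl : phiA (FreeGroup.of GenA.l) = phiA (FreeGroup.of GenA.v) := hl_a.trans ha
  have ho : phiA (FreeGroup.of GenA.o) = phiA (FreeGroup.of GenA.v) := ho_l.trans hl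
  have hp : phiA (FreeGroup.of GenA.p) = phiA (FreeGroup.of GenA.v) := hp_o.trans ho
  have hq : phiA (FreeGroup.of GenA.q) = phiA (FreeGroup.of GenA.v) := hq_p.trans hp
  have hr : phiA (FreeGroup.of GenA.r) = phiA (FreeGroup.of GenA.v) := hr_q.trans hq
  have hu : phiA (FreeGroup.of GenA.u) = phiA (FreeGroup.of GenA.v) := hu_r.trans hr
  have hn : phiA (FreeGroup.of GenA.n) = (phiA (FreeGroup.of GenA.v)) ^ 6 :=
    (n_eq h25 (hc.trans he.symm) hp hw_v ha hr (hg.trans he.symm)).trans rfl |>.trans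
      (by rw [he] at *) |>.trans rfl
  have hx : phiA (FreeGroup.of GenA.x) = (phiA (FreeGroup.of GenA.v)) ^ 6 := h24.trans hn
  have hy : phiA (FreeGroup.of GenA.y) = (phiA (FreeGroup.of GenA.v)) ^ 6 := hxy.symm.trans hx
  exact ⟨⟨hc, hd, he, hf, hg, hh, hi, hj, hk⟩, ⟨ha, hl, ho, hp, hq, hr, hu, hw_v⟩, hs,
    hx, hy, hn⟩
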